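/- Orthogonality of influence functions: when conditional mean transportability over S holds for treatment a=0 (so g_{1,0}(X) = g_{0,0}(X) =: g_0(X) a.s. on the index support), the influence functions Ψ(O) = Γ_{1,1}(O) − Γ_{0,2}(O) and Δ(O) = Γ_{1,0}(O) − Γ_{0,0}(O) satisfy E[Δ(O)·Ψ(O)] = 0. -/
import Mathlib


open scoped Classical BigOperators
open Finset

noncomputable section

/-- Indicator of a proposition. -/
def ind (P : Prop) : ℝ := if P then 1 else 0

/-- Expectation with respect to weights `p` on a finite outcome space. -/
def pexp {Ω : Type*} [Fintype Ω] (p : Ω → ℝ) (f : Ω → ℝ) : ℝ := ∑ ω, p ω * f ω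

/-- Probability of an event. -/
def prob {Ω : Type*} [Fintype Ω] (p : Ω → ℝ) (B : Ω → Prop) : ℝ :=
  pexp p (fun ω => ind (B ω))

/-- Conditional expectation of `f` given event `B`. -/
def cexp {Ω : Type*} [Fintype Ω] (p : Ω → ℝ) (f : Ω → ℝ) (B : Ω → Prop) : ℝ :=
  pexp p (fun ω => f ω * ind (B ω)) / prob p B

/-- Conditional probability of `B` given `C`. -/
def cprob {Ω : Type*} [Fintype Ω] (p : Ω → ℝ) (B C : Ω → Prop) : ℝ :=
  prob p (fun ω => B ω ∧ C ω) / prob p C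

/-- Conditional outcome mean `g_{s,a}(x) = E[Y | X = x, S = s, A = a]`. -/
def gfun {Ω 𝒳 : Type*} [Fintype Ω] (p : Ω → ℝ) (X : Ω → 𝒳) (S A : Ω → ℕ)
    (Y : Ω → ℝ) (s a : ℕ) (x : 𝒳) : ℝ :=
  cexp p Y (fun ω => X ω = x ∧ S ω = s ∧ A ω = a)

/-- Standardized functional `γ_{s,a} = E[ E[Y | X, S=s, A=a] | S=1 ]`. -/
def gam {Ω 𝒳 : Type*} [Fintype Ω] (p : Ω → ℝ) (X : Ω → 𝒳) (S A : Ω → ℕ)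
    (Y : Ω → ℝ) (s a : ℕ) : ℝ :=
  cexp p (fun ω => gfun p X S A Y s a (X ω)) (fun ω => S ω = 1)

/-- Participation probability `p_s(x) = Pr[S = s | X = x]`. -/
def psel {Ω 𝒳 : Type*} [Fintype Ω] (p : Ω → ℝ) (X : Ω → 𝒳) (S : Ω → ℕ)
    (s : ℕ) (x : 𝒳) : ℝ :=
  cprob p (fun ω => S ω = s) (fun ω => X ω = x)

/-- Treatment probability `e_{s,a}(x) = Pr[A = a | X = x, S = s]`. -/
def etrt {Ω 𝒳 : Type*} [Fintype Ω] (p : Ω → ℝ) (X : Ω → 𝒳) (S A : Ω → ℕ)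
    (s a : ℕ) (x : 𝒳) : ℝ :=
  cprob p (fun ω => A ω = a) (fun ω => X ω = x ∧ S ω = s)

/-- Weight `w_{s,a}(X,S,A) = I(S=s, A=a) p_1(X) / (e_{s,a}(X) p_s(X))`. -/
def wgt {Ω 𝒳 : Type*} [Fintype Ω] (p : Ω → ℝ) (X : Ω → 𝒳) (S A : Ω → ℕ)
    (s a : ℕ) (ω : Ω) : ℝ :=
  ind (S ω = s ∧ A ω = a) * psel p X S 1 (X ω) /
    (etrt p X S A s a (X ω) * psel p X S s (X ω))

/-- Influence function `Γ_{s,a}(O)`. -/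
def Gam {Ω 𝒳 : Type*} [Fintype Ω] (p : Ω → ℝ) (X : Ω → 𝒳) (S A : Ω → ℕ)
    (Y : Ω → ℝ) (s a : ℕ) (ω : Ω) : ℝ :=
  (1 / prob p (fun ω' => S ω' = 1)) *
    (ind (S ω = 1) * (gfun p X S A Y s a (X ω) - gam p X S A Y s a)
      + wgt p X S A s a ω * (Y ω - gfun p X S A Y s a (X ω)))


lemma ind_nonneg (P : Prop) : 0 ≤ ind P := by
  unfold ind; split <;> norm_num

/-- Residual lemma: conditional-mean residuals sum to zero. -/
lemma residual_zero {Ω 𝒳 : Type*} [Fintype Ω] (p : Ω → ℝ)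
    (hp0 : ∀ ω, 0 ≤ p ω) (X : Ω → 𝒳) (S A : Ω → ℕ) (Y : Ω → ℝ)
    (s a : ℕ) (x : 𝒳) :
    ∑ ω, p ω * ind (X ω = x ∧ S ω = s ∧ A ω = a) *
      (Y ω - gfun p X S A Y s a x) = 0 := by
  set B : Ω → Prop := fun ω => X ω = x ∧ S ω = s ∧ A ω = a with hB
  have hPr : prob p B = ∑ ω, p ω * ind (B ω) := by
    simp [prob, pexp]
  by_cases h0 : prob p B = 0
  · apply Finset.sum_eq_zero
    intro ω _
    have hterm : p ω * ind (B ω) = 0 := by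
      have hnn : ∀ i ∈ Finset.univ, 0 ≤ p i * ind (B i) := fun i _ =>
        mul_nonneg (hp0 i) (ind_nonneg _)
      have := (Finset.sum_eq_zero_iff_of_nonneg hnn).1 (by rw [← hPr]; exact h0)
      exact this ω (Finset.mem_univ ω)
    calc p ω * ind (B ω) * (Y ω - gfun p X S A Y s a x)
        = 0 * (Y ω - gfun p X S A Y s a x) := by rw [hterm]
      _ = 0 := by ring
  · have hg : gfun p X S A Y s a x
        = (∑ ω, p ω * (Y ω * ind (B ω))) / prob p B := by
      simp [gfun, cexp, pexp, hB]
    have hsplit : ∑ ω, p ω * ind (B ω) * (Y ω - gfun p X S A Y s a x)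
        = (∑ ω, p ω * (Y ω * ind (B ω)))
          - gfun p X S A Y s a x * (∑ ω, p ω * ind (B ω)) := by
      rw [Finset.mul_sum, ← Finset.sum_sub_distrib]
      apply Finset.sum_congr rfl
      intro ω _; ring
    rw [hsplit, ← hPr, hg, div_mul_cancel₀ _ h0, sub_self]

/-- Transportability of the standardized functional. -/
lemma gam_eq {Ω 𝒳 : Type*} [Fintype Ω] (p : Ω → ℝ)
    (hp0 : ∀ ω, 0 ≤ p ω) (X : Ω → 𝒳) (S A : Ω → ℕ) (Y : Ω → ℝ)
    (htrans : ∀ x, 0 < prob p (fun ω => X ω = x ∧ S ω = 1) →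
      gfun p X S A Y 1 0 x = gfun p X S A Y 0 0 x) :
    gam p X S A Y 1 0 = gam p X S A Y 0 0 := by
  unfold gam cexp pexp
  congr 1
  apply Finset.sum_congr rfl
  intro ω _
  by_cases hpω : p ω = 0
  · simp [hpω]
  · by_cases hS : S ω = 1
    · have hpos : 0 < prob p (fun ω' => X ω' = X ω ∧ S ω' = 1) := by
        have hge : p ω * ind (X ω = X ω ∧ S ω = 1)
            ≤ ∑ ω', p ω' * ind (X ω' = X ω ∧ S ω' = 1) :=
          Finset.single_le_sum (f := fun ω' => p ω' * ind (X ω' = X ω ∧ S ω' = 1))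
            (fun i _ => mul_nonneg (hp0 i) (ind_nonneg _)) (Finset.mem_univ ω)
        have hindone : ind (X ω = X ω ∧ S ω = 1) = 1 := by simp [ind, hS]
        have hppos : 0 < p ω := lt_of_le_of_ne (hp0 ω) (Ne.symm hpω)
        have : 0 < ∑ ω', p ω' * ind (X ω' = X ω ∧ S ω' = 1) := by
          calc (0:ℝ) < p ω := hppos
            _ = p ω * ind (X ω = X ω ∧ S ω = 1) := by rw [hindone, mul_one]
            _ ≤ _ := hge
        simpa [prob, pexp] using this
      simp only [htrans (X ω) hpos]
    · simp [ind, hS]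

/-- Variance of `f` under `p`. -/
def pvar {Ω : Type*} [Fintype Ω] (p : Ω → ℝ) (f : Ω → ℝ) : ℝ :=
  pexp p (fun ω => (f ω - pexp p f) ^ 2)

theorem statement10
    {Ω 𝒳 : Type*} [Fintype Ω] (p : Ω → ℝ)
    (hp0 : ∀ ω, 0 ≤ p ω) (hp1 : ∑ ω, p ω = 1)
    (X : Ω → 𝒳) (S A : Ω → ℕ) (Y : Ω → ℝ)
    (hbin : ∀ ω, S ω = 0 ∨ S ω = 1)
    (hz0 : 0 < prob p (fun ω => S ω = 1)) (hz1 : prob p (fun ω => S ω = 1) < 1)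
    (hposp : ∀ x, 0 < prob p (fun ω => X ω = x) →
      0 < psel p X S 1 x ∧ psel p X S 1 x < 1)
    (hpose : ∀ x, 0 < prob p (fun ω => X ω = x) →
      0 < etrt p X S A 1 1 x ∧ 0 < etrt p X S A 1 0 x ∧
        0 < etrt p X S A 0 2 x ∧ 0 < etrt p X S A 0 0 x)
    (htrans : ∀ x, 0 < prob p (fun ω => X ω = x ∧ S ω = 1) →
      gfun p X S A Y 1 0 x = gfun p X S A Y 0 0 x) :
    pexp p (fun ω =>
      (Gam p X S A Y 1 0 ω - Gam p X S A Y 0 0 ω) *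
        (Gam p X S A Y 1 1 ω - Gam p X S A Y 0 2 ω)) = 0 := by
  classical
  -- abbreviations
  set Z : ℝ := prob p (fun ω' => S ω' = 1) with hZ
  have hgam : gam p X S A Y 1 0 = gam p X S A Y 0 0 :=
    gam_eq p hp0 X S A Y htrans
  -- the pointwise factor
  set K : 𝒳 → ℝ := fun x =>
    (1 / Z) ^ 2 * (psel p X S 1 x / (etrt p X S A 1 0 x * psel p X S 1 x)) *
      ((gfun p X S A Y 1 1 x - gam p X S A Y 1 1)
        - (gfun p X S A Y 0 2 x - gam p X S A Y 0 2)) with hK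
  set F : 𝒳 → Ω → ℝ := fun x ω =>
    K x * (p ω * ind (X ω = x ∧ S ω = 1 ∧ A ω = 0) *
      (Y ω - gfun p X S A Y 1 0 x)) with hF
  have hpoint : ∀ ω, p ω *
      ((Gam p X S A Y 1 0 ω - Gam p X S A Y 0 0 ω) *
        (Gam p X S A Y 1 1 ω - Gam p X S A Y 0 2 ω)) = F (X ω) ω := by
    intro ω
    by_cases hpω : p ω = 0
    · simp [hF, hpω]
    rcases hbin ω with hS | hS
    · -- S ω = 0
      by_cases hA : A ω = 0 <;>
        simp [hF, Gam, wgt, ind, hS, hA, hZ] <;> ring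
    · -- S ω = 1
      have hpos : 0 < prob p (fun ω' => X ω' = X ω ∧ S ω' = 1) := by
        have hge : p ω * ind (X ω = X ω ∧ S ω = 1)
            ≤ ∑ ω', p ω' * ind (X ω' = X ω ∧ S ω' = 1) :=
          Finset.single_le_sum (f := fun ω' => p ω' * ind (X ω' = X ω ∧ S ω' = 1))
            (fun i _ => mul_nonneg (hp0 i) (ind_nonneg _)) (Finset.mem_univ ω)
        have hindone : ind (X ω = X ω ∧ S ω = 1) = 1 := by simp [ind, hS]
        have hppos : 0 < p ω := lt_of_le_of_ne (hp0 ω) (Ne.symm hpω)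
        have : 0 < ∑ ω', p ω' * ind (X ω' = X ω ∧ S ω' = 1) := by
          calc (0:ℝ) < p ω := hppos
            _ = p ω * ind (X ω = X ω ∧ S ω = 1) := by rw [hindone, mul_one]
            _ ≤ _ := hge
        simpa [prob, pexp] using this
      have hgx : gfun p X S A Y 1 0 (X ω) = gfun p X S A Y 0 0 (X ω) :=
        htrans (X ω) hpos
      by_cases hA : A ω = 0 <;>
        simp [hF, hK, Gam, wgt, ind, hS, hA, hgx, hgam, hZ] <;> ring
  -- sum it up
  have hstep : pexp p (fun ω =>
      (Gam p X S A Y 1 0 ω - Gam p X S A Y 0 0 ω) *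
        (Gam p X S A Y 1 1 ω - Gam p X S A Y 0 2 ω))
      = ∑ ω, F (X ω) ω := by
    unfold pexp
    exact Finset.sum_congr rfl (fun ω _ => hpoint ω)
  rw [hstep]
  have hfib : ∑ ω, F (X ω) ω
      = ∑ x ∈ Finset.univ.image X, ∑ ω ∈ Finset.univ.filter (fun ω => X ω = x),
          F (X ω) ω := by
    rw [Finset.sum_fiberwise_of_maps_to (fun ω _ => Finset.mem_image_of_mem X
      (Finset.mem_univ ω))]
  rw [hfib]
  apply Finset.sum_eq_zero
  intro x _
  have hconst : ∑ ω ∈ Finset.univ.filter (fun ω => X ω = x), F (X ω) ω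
      = ∑ ω ∈ Finset.univ.filter (fun ω => X ω = x), F x ω := by
    apply Finset.sum_congr rfl
    intro ω hω
    rw [Finset.mem_filter] at hω
    rw [hω.2]
  rw [hconst]
  have hfull : ∑ ω ∈ Finset.univ.filter (fun ω => X ω = x), F x ω
      = ∑ ω, F x ω := by
    apply Finset.sum_subset (Finset.filter_subset _ _)
    intro ω _ hω
    rw [Finset.mem_filter] at hω
    have hx : ¬ X ω = x := fun h => hω ⟨Finset.mem_univ ω, h⟩
    simp [hF, ind, hx]
  rw [hfull]
  have : ∑ ω, F x ω = K x * ∑ ω, p ω * ind (X ω = x ∧ S ω = 1 ∧ A ω = 0) *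
      (Y ω - gfun p X S A Y 1 0 x) := by
    rw [Finset.mul_sum]
  rw [this, residual_zero p hp0 X S A Y 1 0 x, mul_zero]
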